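/- Let K be a convex body in R^d, let C be a cap of K, and let rho >= 1. Then the Lebesgue measure (volume) of the rho-expansion C^rho is at most rho^d times the volume of C. -/

import Mathlib

open Set MeasureTheory Metric

/-- Lemma `cap-exp`: for a cap `C` of a convex body `K` and `ρ ≥ 1`,
the volume of the `ρ`-expansion `C^ρ` is at most `ρ^d` times the volume of `C`. -/
theorem volume_cap_expansion_le (d : ℕ)
    (K : Set (EuclideanSpace ℝ (Fin d)))
    (hK_compact : IsCompact K) (hK_conv : Convex ℝ K)
    (hK_int : (interior K).Nonempty)
    (u : EuclideanSpace ℝ (Fin d)) (hu : ‖u‖ = 1) (c : ℝ)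
    (C : Set (EuclideanSpace ℝ (Fin d)))
    (hC : C = {x ∈ K | c ≤ (inner ℝ u x : ℝ)}) (hCne : C.Nonempty)
    (rho : ℝ) (hrho : 1 ≤ rho) :
    volume {x ∈ K |
        sSup ((fun y => (inner ℝ u y : ℝ)) '' K)
          - rho * (sSup ((fun y => (inner ℝ u y : ℝ)) '' K) - c) ≤ (inner ℝ u x : ℝ)}
      ≤ ENNReal.ofReal (rho ^ d) * volume C := by
  have hρ0 : (0:ℝ) < rho := lt_of_lt_of_le one_pos hrho
  have hKne : K.Nonempty := hK_int.mono interior_subset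
  obtain ⟨z, hzK, hz⟩ := hK_compact.exists_isMaxOn (f := fun x => (inner ℝ u x : ℝ)) hKne
    ((continuous_const.inner continuous_id).continuousOn)
  have hM : sSup ((fun y => (inner ℝ u y : ℝ)) '' K) = (inner ℝ u z : ℝ) := by
    apply IsGreatest.csSup_eq
    exact ⟨⟨z, hzK, rfl⟩, by rintro _ ⟨x, hx, rfl⟩; exact hz hx⟩
  rw [hM]
  have hsub : {x ∈ K | (inner ℝ u z : ℝ) - rho * ((inner ℝ u z : ℝ) - c) ≤ (inner ℝ u x : ℝ)}
      ⊆ AffineMap.homothety z rho '' C := by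
    rintro x ⟨hxK, hxl⟩
    refine ⟨AffineMap.homothety z rho⁻¹ x, ?_, ?_⟩
    · have hy : AffineMap.homothety z rho⁻¹ x = rho⁻¹ • x + (1 - rho⁻¹) • z := by
        simp [AffineMap.homothety_apply, smul_sub, sub_smul]
        abel
      rw [hC, hy]
      constructor
      · exact hK_conv hxK hzK (by positivity)
          (by linarith [inv_le_one_of_one_le₀ hrho]) (by ring)
      · have hinner : (inner ℝ u (rho⁻¹ • x + (1 - rho⁻¹) • z) : ℝ)
            = rho⁻¹ * (inner ℝ u x : ℝ) + (1 - rho⁻¹) * (inner ℝ u z : ℝ) := by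
          simp [inner_add_right, inner_smul_right]
        rw [hinner]
        have h1 : rho⁻¹ * ((inner ℝ u z : ℝ) - rho * ((inner ℝ u z : ℝ) - c))
            ≤ rho⁻¹ * (inner ℝ u x : ℝ) :=
          mul_le_mul_of_nonneg_left hxl (by positivity)
        have h2 : rho⁻¹ * rho = 1 := inv_mul_cancel₀ hρ0.ne'
        have h1' : rho⁻¹ * (inner ℝ u z : ℝ) - (rho⁻¹ * rho) * ((inner ℝ u z : ℝ) - c)
            ≤ rho⁻¹ * (inner ℝ u x : ℝ) := by
          calc rho⁻¹ * (inner ℝ u z : ℝ) - (rho⁻¹ * rho) * ((inner ℝ u z : ℝ) - c)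
              = rho⁻¹ * ((inner ℝ u z : ℝ) - rho * ((inner ℝ u z : ℝ) - c)) := by ring
            _ ≤ _ := h1
        rw [h2, one_mul] at h1'
        linarith
    · have : rho • (rho⁻¹ • (x - z)) = x - z := by
        rw [smul_smul, mul_inv_cancel₀ hρ0.ne', one_smul]
      simp [AffineMap.homothety_apply, this]
  calc volume {x ∈ K | (inner ℝ u z : ℝ) - rho * ((inner ℝ u z : ℝ) - c) ≤ (inner ℝ u x : ℝ)}
      ≤ volume (AffineMap.homothety z rho '' C) := measure_mono hsub
    _ = ENNReal.ofReal (|rho ^ Module.finrank ℝ (EuclideanSpace ℝ (Fin d))|) * volume C :=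
        Measure.addHaar_image_homothety (μ := volume) z rho C
    _ = ENNReal.ofReal (rho ^ d) * volume C := by
        rw [finrank_euclideanSpace_fin, abs_of_pos (by positivity)]
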